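/- On R^6, define P with nonzero entries P^{13} = p13, P^{24} = p24, P^{26} = p24 x5, P^{36} = p36, P^{56} = p56 and P' with nonzero entries P'^{13} = a31 x1, P'^{24} = b42 x2 + b44 x4, P'^{26} = b42 x2 x5 + b44 x4 x5, P'^{56} = e65 x5 (real constants). Then P and P' are compatible Poisson structures: [P,P] = [P',P'] = [P,P'] = 0 identically on R^6. -/

import Mathlib

open scoped BigOperators

noncomputable def pd {m : ℕ} (μ : Fin m) (f : (Fin m → ℝ) → ℝ) (x : Fin m → ℝ) : ℝ :=
  fderiv ℝ f x (Pi.single μ 1)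

/-- Poisson bracket associated to a bivector field `P`. -/
noncomputable def pbrk {m : ℕ} (P : (Fin m → ℝ) → Fin m → Fin m → ℝ)
    (f g : (Fin m → ℝ) → ℝ) (x : Fin m → ℝ) : ℝ :=
  ∑ μ, ∑ ν, P x μ ν * pd μ f x * pd ν g x

/-- Schouten bracket `[P,P]^{λμν}`. -/
noncomputable def schouten {m : ℕ} (P : (Fin m → ℝ) → Fin m → Fin m → ℝ)
    (l μ ν : Fin m) (x : Fin m → ℝ) : ℝ :=
  ∑ ρ, (P x ρ l * pd ρ (fun y => P y μ ν) x
      + P x ρ ν * pd ρ (fun y => P y l μ) x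
      + P x ρ μ * pd ρ (fun y => P y ν l) x)

/-- Mixed Schouten bracket `[P,Q]^{λμν}`. -/
noncomputable def schoutenMixed {m : ℕ} (P Q : (Fin m → ℝ) → Fin m → Fin m → ℝ)
    (l μ ν : Fin m) (x : Fin m → ℝ) : ℝ :=
  ∑ ρ, (P x ρ l * pd ρ (fun y => Q y μ ν) x + Q x ρ l * pd ρ (fun y => P y μ ν) x
      + P x ρ ν * pd ρ (fun y => Q y l μ) x + Q x ρ ν * pd ρ (fun y => P y l μ) x
      + P x ρ μ * pd ρ (fun y => Q y ν l) x + Q x ρ μ * pd ρ (fun y => P y ν l) x)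

/-- The Poisson bivector `P` on the nilpotent group `A_{6,25}`. -/
noncomputable def P625 (p13 p24 p36 p56 : ℝ) : (Fin 6 → ℝ) → Fin 6 → Fin 6 → ℝ :=
  fun x μ ν =>
    let C := p24 * x 4
    !![0, 0, p13, 0, 0, 0;
       0, 0, 0, p24, 0, C;
       -p13, 0, 0, 0, 0, p36;
       0, -p24, 0, 0, 0, 0;
       0, 0, 0, 0, 0, p56;
       0, -C, -p36, 0, -p56, 0] μ ν

/-- The Poisson bivector `P'` on the nilpotent group `A_{6,25}`. -/
noncomputable def P625' (a31 b42 b44 e65 : ℝ) : (Fin 6 → ℝ) → Fin 6 → Fin 6 → ℝ :=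
  fun x μ ν =>
    let A := a31 * x 0
    let B := b42 * x 1 + b44 * x 3
    let C := b42 * x 1 * x 4 + b44 * x 3 * x 4
    let E := e65 * x 4
    !![0, 0, A, 0, 0, 0;
       0, 0, 0, B, 0, C;
       -A, 0, 0, 0, 0, 0;
       0, -B, 0, 0, 0, 0;
       0, 0, 0, 0, 0, E;
       0, -C, 0, 0, -E, 0] μ ν

lemma cons_val_five' {α : Type*} (a : α) (u : Fin 5 → α) : Matrix.vecCons a u 5 = u 4 := rfl

lemma hasFDerivAt_coord {m : ℕ} (i : Fin m) (x : Fin m → ℝ) :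
    HasFDerivAt (fun y : Fin m → ℝ => y i)
      (ContinuousLinearMap.proj (R := ℝ) (φ := fun _ : Fin m => ℝ) i) x :=
  (ContinuousLinearMap.proj (R := ℝ) (φ := fun _ : Fin m => ℝ) i).hasFDerivAt

lemma pd_const {m : ℕ} (μ : Fin m) (c : ℝ) (x) : pd μ (fun _ => c) x = 0 := by
  simp [pd]

lemma pd_lin {m : ℕ} (μ : Fin m) (c : ℝ) (i : Fin m) (x) :
    pd μ (fun y => c * y i) x = if i = μ then c else 0 := by
  have h := ((hasFDerivAt_coord i x).const_mul c).fderiv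
  simp only [pd, h]
  simp [Pi.single_apply]

lemma pd_addlin {m : ℕ} (μ : Fin m) (c d : ℝ) (i j : Fin m) (x) :
    pd μ (fun y => c * y i + d * y j) x =
      (if i = μ then c else 0) + (if j = μ then d else 0) := by
  have h := (((hasFDerivAt_coord i x).const_mul c).add
    ((hasFDerivAt_coord j x).const_mul d)).fderiv
  simp only [Pi.add_def] at h
  simp only [pd, h]
  simp [Pi.single_apply]

lemma pd_addquad {m : ℕ} (μ : Fin m) (c d : ℝ) (i j k : Fin m) (x) :
    pd μ (fun y => c * y i * y k + d * y j * y k) x =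
      ((if i = μ then c * x k else 0) + (if k = μ then c * x i else 0))
      + ((if j = μ then d * x k else 0) + (if k = μ then d * x j else 0)) := by
  have h := ((((hasFDerivAt_coord i x).const_mul c).mul (hasFDerivAt_coord k x)).add
    (((hasFDerivAt_coord j x).const_mul d).mul (hasFDerivAt_coord k x))).fderiv
  simp only [Pi.add_def, Pi.mul_def, Pi.neg_def] at h
  simp only [pd, h]
  simp [Pi.single_apply]
  split <;> split <;> split <;> ring

lemma pd_neg {m : ℕ} (μ : Fin m) (f : (Fin m → ℝ) → ℝ) (x) :
    pd μ (fun y => -f y) x = -pd μ f x := by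
  simp [pd, fderiv_neg]

/-- antisymmetric elementary matrix -/
def E6 (i j k l : Fin 6) : ℝ :=
  (if k = i ∧ l = j then (1:ℝ) else 0) - (if k = j ∧ l = i then 1 else 0)

lemma pd_P (p13 p24 p36 p56 : ℝ) (ρ μ ν : Fin 6) (x : Fin 6 → ℝ) :
    pd ρ (fun y => P625 p13 p24 p36 p56 y μ ν) x =
      (if (4:Fin 6) = ρ then p24 else 0) * E6 1 5 μ ν := by
  fin_cases μ <;> fin_cases ν <;>
    simp (config := { decide := true }) [P625, cons_val_five', pd_const, pd_lin, pd_neg, E6]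


lemma pd_shape1 {m : ℕ} (μ : Fin m) (c d : ℝ) (i j : Fin m) (x) :
    pd μ (fun y => -(c * y i) + -(d * y j)) x =
      (if i = μ then -c else 0) + (if j = μ then -d else 0) := by
  have h := (((hasFDerivAt_coord i x).const_mul c).neg.add
    ((hasFDerivAt_coord j x).const_mul d).neg).fderiv
  simp only [Pi.add_def, Pi.mul_def, Pi.neg_def] at h
  simp only [pd, h]
  simp [Pi.single_apply]
  split <;> split <;> ring

lemma pd_shape2 {m : ℕ} (μ : Fin m) (c d : ℝ) (i j k : Fin m) (x) :
    pd μ (fun y => -(c * y i * y k) + -(d * y j * y k)) x =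
      (if i = μ then -(c * x k) else 0) + (if j = μ then -(d * x k) else 0)
      + (if k = μ then -(c * x i) - d * x j else 0) := by
  have h := ((((hasFDerivAt_coord i x).const_mul c).mul (hasFDerivAt_coord k x)).neg.add
    ((((hasFDerivAt_coord j x).const_mul d).mul (hasFDerivAt_coord k x)).neg)).fderiv
  simp only [Pi.add_def, Pi.mul_def, Pi.neg_def] at h
  simp only [pd, h]
  simp [Pi.single_apply]
  split <;> split <;> split <;> ring

lemma pd_P' (a31 b42 b44 e65 : ℝ) (ρ μ ν : Fin 6) (x : Fin 6 → ℝ) :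
    pd ρ (fun y => P625' a31 b42 b44 e65 y μ ν) x =
      (if (0:Fin 6) = ρ then a31 else 0) * E6 0 2 μ ν
      + ((if (1:Fin 6) = ρ then b42 else 0) + (if (3:Fin 6) = ρ then b44 else 0)) * E6 1 3 μ ν
      + ((if (1:Fin 6) = ρ then b42 * x 4 else 0) + (if (3:Fin 6) = ρ then b44 * x 4 else 0)
         + (if (4:Fin 6) = ρ then b42 * x 1 + b44 * x 3 else 0)) * E6 1 5 μ ν
      + (if (4:Fin 6) = ρ then e65 else 0) * E6 4 5 μ ν := by
  fin_cases μ <;> fin_cases ν <;>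
    simp (config := { decide := true }) [P625', cons_val_five'] <;>
    simp (config := { decide := true }) [pd_const, pd_lin, pd_neg,
      pd_addlin, pd_addquad, pd_shape1, pd_shape2, E6] <;>
    (try split) <;> (try split) <;> (try split) <;> ring_nf


set_option maxHeartbeats 4000000 in
lemma part1 (p13 p24 p36 p56 : ℝ) (x : Fin 6 → ℝ) (l μ ν : Fin 6) :
    schouten (P625 p13 p24 p36 p56) l μ ν x = 0 := by
  simp only [schouten, Fin.sum_univ_six, pd_P]
  simp (config := { decide := true }) only [reduceIte, zero_mul, mul_zero, add_zero, zero_add]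
  fin_cases l <;> fin_cases μ <;> fin_cases ν <;>
    simp (config := { decide := true }) [P625, cons_val_five', E6, -mul_eq_zero,
      Matrix.vecHead, Matrix.vecTail, Function.comp] <;> ring

set_option maxHeartbeats 4000000 in
lemma part2 (a31 b42 b44 e65 : ℝ) (x : Fin 6 → ℝ) (l μ ν : Fin 6) :
    schouten (P625' a31 b42 b44 e65) l μ ν x = 0 := by
  simp only [schouten, Fin.sum_univ_six, pd_P']
  simp (config := { decide := true }) only [reduceIte, zero_mul, mul_zero, add_zero, zero_add]
  fin_cases l <;> fin_cases μ <;> fin_cases ν <;>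
    simp (config := { decide := true }) [P625', cons_val_five', E6, -mul_eq_zero,
      Matrix.vecHead, Matrix.vecTail, Function.comp] <;> ring

set_option maxHeartbeats 8000000 in
lemma part3 (p13 p24 p36 p56 a31 b42 b44 e65 : ℝ) (x : Fin 6 → ℝ) (l μ ν : Fin 6) :
    schoutenMixed (P625 p13 p24 p36 p56) (P625' a31 b42 b44 e65) l μ ν x = 0 := by
  simp only [schoutenMixed, Fin.sum_univ_six, pd_P, pd_P']
  simp (config := { decide := true }) only [reduceIte, zero_mul, mul_zero, add_zero, zero_add]
  fin_cases l <;> fin_cases μ <;> fin_cases ν <;>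
    simp (config := { decide := true }) [P625, P625', cons_val_five', E6, -mul_eq_zero,
      Matrix.vecHead, Matrix.vecTail, Function.comp] <;> ring

theorem A625_compatible (p13 p24 p36 p56 a31 b42 b44 e65 : ℝ) :
    (∀ x l μ ν, schouten (P625 p13 p24 p36 p56) l μ ν x = 0) ∧
    (∀ x l μ ν, schouten (P625' a31 b42 b44 e65) l μ ν x = 0) ∧
    (∀ x l μ ν, schoutenMixed (P625 p13 p24 p36 p56)
        (P625' a31 b42 b44 e65) l μ ν x = 0) :=
  ⟨fun x l μ ν => part1 p13 p24 p36 p56 x l μ ν,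
   fun x l μ ν => part2 a31 b42 b44 e65 x l μ ν,
   fun x l μ ν => part3 p13 p24 p36 p56 a31 b42 b44 e65 x l μ ν⟩
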